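/- Let Q = v1…v_p be a shortest induced odd cycle (p ≥ 5 odd) in a triangle-free graph H, and let w be a vertex not on Q adjacent to at least two vertices of Q. Then the two neighbors of w on Q are at distance exactly 2 along the cycle; i.e., if w is adjacent to v_i and v_j with i ≠ j, then j ≡ i ± 2 (mod p). -/

import Mathlib

private lemma natCast_zmod_inj {p a b : ℕ} (ha : a < p) (hb : b < p)
    (h : (a : ZMod p) = b) : a = b := by
  have := congrArg ZMod.val h
  rwa [ZMod.val_natCast, ZMod.val_natCast, Nat.mod_eq_of_lt ha, Nat.mod_eq_of_lt hb] at this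

private lemma tri {V : Type*} {H : SimpleGraph V} (htf : H.CliqueFree 3) {a b c : V}
    (hab : H.Adj a b) (hac : H.Adj a c) (hbc : H.Adj b c) : False := by
  classical
  exact htf {a, b, c} (SimpleGraph.is3Clique_triple_iff.mpr ⟨hab, hac, hbc⟩)

private lemma cyc {V : Type*} {H : SimpleGraph V} (htf : H.CliqueFree 3)
    {p : ℕ} (hp : 5 ≤ p)
    {v : ZMod p → V} (hinj : Function.Injective v)
    (hind : ∀ i j : ZMod p, H.Adj (v i) (v j) ↔ (j = i + 1 ∨ i = j + 1))
    (hmin : ∀ q : ℕ, Odd q → 3 ≤ q →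
      (∃ u : ZMod q → V, Function.Injective u ∧
        ∀ i j : ZMod q, H.Adj (u i) (u j) ↔ (j = i + 1 ∨ i = j + 1)) → p ≤ q)
    {w : V} (hw : ∀ i, w ≠ v i)
    (a : ZMod p) (e : ℕ) (he3 : 3 ≤ e) (hep : e ≤ p - 4) (heo : Odd e)
    (h0 : H.Adj w (v a)) (hee : H.Adj w (v (a + (e : ZMod p))))
    (hint : ∀ m : ℕ, 0 < m → m < e → ¬ H.Adj w (v (a + (m : ZMod p)))) : False := by
  haveI : NeZero p := ⟨by omega⟩
  set q := e + 2 with hq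
  haveI : NeZero q := ⟨by omega⟩
  haveI : Fact (1 < q) := ⟨by omega⟩
  have hqp : q < p := by omega
  set u : ZMod q → V := fun m => if m.val = 0 then w else v (a + ((m.val - 1 : ℕ) : ZMod p)) with hu
  have hvlt : ∀ m : ZMod q, m.val < q := fun m => ZMod.val_lt m
  have valinj : ∀ x y : ZMod q, x.val = y.val → x = y := fun x y h => ZMod.val_injective q h
  -- characterization of successor in ZMod q
  have succ_iff : ∀ m n : ZMod q, n = m + 1 ↔
      (n.val = m.val + 1 ∨ (m.val = q - 1 ∧ n.val = 0)) := by
    intro m n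
    have hv1 : (m + 1).val = (m.val + 1) % q := by rw [ZMod.val_add, ZMod.val_one]
    have hm := hvlt m
    have hn := hvlt n
    constructor
    · intro h
      subst h
      rcases Nat.lt_or_ge (m.val + 1) q with h' | h'
      · left; rw [hv1, Nat.mod_eq_of_lt h']
      · right
        have h2 : m.val + 1 = q := by omega
        refine ⟨by omega, ?_⟩
        rw [hv1, h2, Nat.mod_self]
    · intro h
      apply valinj
      rw [hv1]
      rcases h with h | ⟨h1, h2⟩
      · rw [h, Nat.mod_eq_of_lt (by omega)]
      · rw [h2, h1]
        have h3 : q - 1 + 1 = q := by omega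
        rw [h3, Nat.mod_self]
  -- adjacency among arc vertices
  have vadj : ∀ s t : ℕ, s ≤ e → t ≤ e →
      (H.Adj (v (a + (s : ZMod p))) (v (a + (t : ZMod p))) ↔ (t = s + 1 ∨ s = t + 1)) := by
    intro s t hs ht
    rw [hind]
    constructor
    · rintro (h | h)
      · left
        have h' : (t : ZMod p) = ((s + 1 : ℕ) : ZMod p) := by
          push_cast
          rw [add_assoc] at h
          exact add_left_cancel h
        exact natCast_zmod_inj (by omega) (by omega) h'
      · right
        have h' : (s : ZMod p) = ((t + 1 : ℕ) : ZMod p) := by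
          push_cast
          rw [add_assoc] at h
          exact add_left_cancel h
        exact natCast_zmod_inj (by omega) (by omega) h'
    · rintro (h | h)
      · left; subst h; push_cast; ring
      · right; subst h; push_cast; ring
  -- injectivity of u
  have uinj : Function.Injective u := by
    intro m n h
    by_cases hm : m.val = 0 <;> by_cases hn : n.val = 0
    · exact valinj _ _ (by omega)
    · rw [hu] at h
      simp only at h
      rw [if_pos hm, if_neg hn] at h
      exact absurd h (hw _)
    · rw [hu] at h
      simp only at h
      rw [if_neg hm, if_pos hn] at h
      exact absurd h.symm (hw _)
    · rw [hu] at h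
      simp only at h
      rw [if_neg hm, if_neg hn] at h
      have h2 := add_left_cancel (hinj h)
      have hm' := hvlt m; have hn' := hvlt n
      have h3 : m.val - 1 = n.val - 1 := natCast_zmod_inj (by omega) (by omega) h2
      exact valinj _ _ (by omega)
  -- adjacency condition for u
  have uadj : ∀ m n : ZMod q, H.Adj (u m) (u n) ↔ (n = m + 1 ∨ m = n + 1) := by
    intro m n
    have hm' := hvlt m; have hn' := hvlt n
    rw [succ_iff, succ_iff]
    by_cases hm : m.val = 0 <;> by_cases hn : n.val = 0
    · simp only [hu]
      rw [if_pos hm, if_pos hn]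
      constructor
      · intro h; exact absurd h (H.loopless.irrefl w)
      · intro h; omega
    · simp only [hu]
      rw [if_pos hm, if_neg hn]
      set t := n.val - 1 with htdef
      have ht : t ≤ e := by omega
      constructor
      · intro h
        by_cases ht0 : t = 0
        · left; left; omega
        · by_cases hte : t = e
          · right; right; exact ⟨by omega, by omega⟩
          · exact absurd h (hint t (by omega) (by omega))
      · rintro ((h | ⟨h1, h2⟩) | (h | ⟨h1, h2⟩))
        · have h3 : t = 0 := by omega
          rw [h3]; simpa using h0
        · omega
        · omega
        · have h3 : t = e := by omega
          rw [h3]; exact hee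
    · simp only [hu]
      rw [if_neg hm, if_pos hn]
      set t := m.val - 1 with htdef
      have ht : t ≤ e := by omega
      constructor
      · intro h
        replace h := h.symm
        by_cases ht0 : t = 0
        · right; left; omega
        · by_cases hte : t = e
          · left; right; exact ⟨by omega, by omega⟩
          · exact absurd h (hint t (by omega) (by omega))
      · rintro ((h | ⟨h1, h2⟩) | (h | ⟨h1, h2⟩))
        · omega
        · have h3 : t = e := by omega
          rw [h3]; exact hee.symm
        · have h3 : t = 0 := by omega
          rw [h3]
          exact (by simpa using h0 : H.Adj w (v (a + ((0:ℕ) : ZMod p)))).symm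
        · omega
    · simp only [hu]
      rw [if_neg hm, if_neg hn]
      rw [vadj _ _ (by omega) (by omega)]
      omega
  exact absurd (hmin q (by rcases heo with ⟨k, hk⟩; exact ⟨k + 1, by omega⟩) (by omega)
    ⟨u, uinj, uadj⟩) (by omega)

private lemma key {V : Type*} {H : SimpleGraph V} (htf : H.CliqueFree 3)
    {p : ℕ} (hp : 5 ≤ p)
    {v : ZMod p → V} (hinj : Function.Injective v)
    (hind : ∀ i j : ZMod p, H.Adj (v i) (v j) ↔ (j = i + 1 ∨ i = j + 1))
    (hmin : ∀ q : ℕ, Odd q → 3 ≤ q →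
      (∃ u : ZMod q → V, Function.Injective u ∧
        ∀ i j : ZMod q, H.Adj (u i) (u j) ↔ (j = i + 1 ∨ i = j + 1)) → p ≤ q)
    {w : V} (hw : ∀ i, w ≠ v i)
    (i : ZMod p) (d : ℕ) (hd3 : 3 ≤ d) (hdp : d ≤ p - 4) (hdo : Odd d)
    (hwi : H.Adj w (v i)) (hwd : H.Adj w (v (i + (d : ZMod p)))) : False := by
  classical
  set S : Finset ℕ := (Finset.range (d + 1)).filter (fun k => H.Adj w (v (i + (k : ZMod p))))
    with hS
  have memS : ∀ k, k ∈ S ↔ (k ≤ d ∧ H.Adj w (v (i + (k : ZMod p)))) := by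
    intro k
    simp [hS, Finset.mem_filter, Finset.mem_range, Nat.lt_succ_iff]
  have h0S : 0 ∈ S := (memS 0).mpr ⟨by omega, by simpa using hwi⟩
  have hdS : d ∈ S := (memS d).mpr ⟨le_refl d, hwd⟩
  set K : Finset ℕ := S.filter (fun k => k < d ∧ Odd (d - k)) with hK
  have h0K : 0 ∈ K := by
    rw [hK, Finset.mem_filter]
    exact ⟨h0S, by omega, by simpa using hdo⟩
  have hKne : K.Nonempty := ⟨0, h0K⟩
  set k₀ := K.max' hKne with hk₀def
  have hk₀K : k₀ ∈ K := K.max'_mem hKne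
  rw [hK, Finset.mem_filter] at hk₀K
  obtain ⟨hk₀S, hk₀d, hk₀odd⟩ := hk₀K
  have hk₀le : k₀ ≤ d := ((memS k₀).mp hk₀S).1
  set L : Finset ℕ := S.filter (fun l => k₀ < l) with hL
  have hdL : d ∈ L := by rw [hL, Finset.mem_filter]; exact ⟨hdS, hk₀d⟩
  have hLne : L.Nonempty := ⟨d, hdL⟩
  set l₀ := L.min' hLne with hl₀def
  have hl₀L : l₀ ∈ L := L.min'_mem hLne
  rw [hL, Finset.mem_filter] at hl₀L
  obtain ⟨hl₀S, hk₀l₀⟩ := hl₀L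
  have hl₀le : l₀ ≤ d := ((memS l₀).mp hl₀S).1
  have hnomid : ∀ m, k₀ < m → m < l₀ → m ∉ S := by
    intro m h1 h2 hmS
    have : m ∈ L := by rw [hL, Finset.mem_filter]; exact ⟨hmS, h1⟩
    have := L.min'_le m this
    omega
  -- the gap is odd
  have hgapodd : Odd (l₀ - k₀) := by
    by_cases hl : l₀ = d
    · rw [hl]; exact hk₀odd
    · have hld : l₀ < d := lt_of_le_of_ne hl₀le hl
      by_contra hev
      have hodd2 : Odd (d - l₀) := by
        have h1 := hk₀odd
        rw [Nat.odd_iff] at h1 ⊢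
        rw [Nat.odd_iff] at hev
        omega
      have : l₀ ∈ K := by
        rw [hK, Finset.mem_filter]; exact ⟨hl₀S, hld, hodd2⟩
      have := K.le_max' l₀ this
      omega
  -- the gap is not 1 (else triangle)
  have hgap1 : l₀ - k₀ ≠ 1 := by
    intro h1
    have hl₀eq : l₀ = k₀ + 1 := by omega
    have hadjv : H.Adj (v (i + (k₀ : ZMod p))) (v (i + (l₀ : ZMod p))) := by
      rw [hind]
      left
      rw [hl₀eq]
      push_cast
      ring
    exact tri htf ((memS k₀).mp hk₀S).2 ((memS l₀).mp hl₀S).2 hadjv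
  set e := l₀ - k₀ with he
  have he3 : 3 ≤ e := by
    rcases hgapodd with ⟨x, hx⟩
    omega
  refine cyc htf hp hinj hind hmin hw (i + (k₀ : ZMod p)) e he3 (by omega) hgapodd
    ((memS k₀).mp hk₀S).2 ?_ ?_
  · have : i + (k₀ : ZMod p) + (e : ZMod p) = i + (l₀ : ZMod p) := by
      have : (k₀ : ZMod p) + (e : ZMod p) = ((k₀ + e : ℕ) : ZMod p) := by push_cast; ring
      rw [add_assoc, this]
      congr 2
      omega
    rw [this]
    exact ((memS l₀).mp hl₀S).2
  · intro m hm1 hm2 hadj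
    have heq : i + (k₀ : ZMod p) + (m : ZMod p) = i + ((k₀ + m : ℕ) : ZMod p) := by
      push_cast; ring
    rw [heq] at hadj
    exact hnomid (k₀ + m) (by omega) (by omega) ((memS (k₀ + m)).mpr ⟨by omega, hadj⟩)

/-- If `Q = v₁…v_p` is a shortest induced odd cycle (`p ≥ 5`) of a triangle-free graph
`H` and `w ∉ Q` is adjacent to two distinct vertices `v_i, v_j` of `Q`, then `v_i` and
`v_j` are at distance exactly 2 along the cycle. -/
theorem stmt16 {V : Type*} (H : SimpleGraph V) (htf : H.CliqueFree 3)
    (p : ℕ) (hp : 5 ≤ p) (hodd : Odd p)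
    (v : ZMod p → V) (hinj : Function.Injective v)
    (hind : ∀ i j : ZMod p, H.Adj (v i) (v j) ↔ (j = i + 1 ∨ i = j + 1))
    (hmin : ∀ q : ℕ, Odd q → 3 ≤ q →
      (∃ u : ZMod q → V, Function.Injective u ∧
        ∀ i j : ZMod q, H.Adj (u i) (u j) ↔ (j = i + 1 ∨ i = j + 1)) → p ≤ q)
    (w : V) (hw : ∀ i, w ≠ v i)
    (i j : ZMod p) (hwi : H.Adj w (v i)) (hwj : H.Adj w (v j)) (hij : i ≠ j) :
    j = i + 2 ∨ i = j + 2 := by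
  haveI : NeZero p := ⟨by omega⟩
  set d := (j - i).val with hd
  have hdcast : (d : ZMod p) = j - i := ZMod.natCast_rightInverse (j - i)
  have hdlt : d < p := ZMod.val_lt _
  have hdne : d ≠ 0 := by
    intro h
    apply hij
    have : (j : ZMod p) - i = 0 := by rw [← hdcast, h]; simp
    have := sub_eq_zero.mp this
    exact this.symm
  have hji : j = i + (d : ZMod p) := by rw [hdcast]; ring
  by_cases hd1 : d = 1
  · -- triangle
    exfalso
    have : H.Adj (v i) (v j) := by
      rw [hind]; left; rw [hji, hd1]; push_cast; ring_nf
    exact tri htf hwi hwj this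
  by_cases hd2 : d = 2
  · left; rw [hji, hd2]; push_cast; ring
  by_cases hdp2 : d = p - 2
  · right
    rw [hji, hdp2]
    have : ((p - 2 : ℕ) : ZMod p) = -2 := by
      have h1 : ((p - 2 : ℕ) : ZMod p) + 2 = ((p - 2 + 2 : ℕ) : ZMod p) := by push_cast; ring
      have h2 : p - 2 + 2 = p := by omega
      have h3 : ((p : ℕ) : ZMod p) = 0 := ZMod.natCast_self p
      rw [h2, h3] at h1
      linear_combination h1
    rw [this]; ring
  by_cases hdp1 : d = p - 1
  · -- triangle
    exfalso
    have : H.Adj (v j) (v i) := by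
      rw [hind]
      left
      rw [hji, hdp1]
      have : ((p - 1 : ℕ) : ZMod p) + 1 = 0 := by
        have h1 : ((p - 1 : ℕ) : ZMod p) + 1 = ((p - 1 + 1 : ℕ) : ZMod p) := by push_cast; ring
        have h2 : p - 1 + 1 = p := by omega
        rw [h2, ZMod.natCast_self] at h1
        exact h1
      rw [add_assoc, this, add_zero]
    exact tri htf hwj hwi this
  -- now 3 ≤ d ≤ p - 3
  exfalso
  have hd3 : 3 ≤ d := by omega
  have hdp3 : d ≤ p - 3 := by omega
  rcases Nat.even_or_odd d with hde | hdo
  · -- use the other arc, of length p - d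
    set e := p - d with he
    have heo : Odd e := by
      rw [Nat.odd_iff] at hodd ⊢
      rw [Nat.even_iff] at hde
      omega
    have he3 : 3 ≤ e := by omega
    have hep : e ≤ p - 4 := by
      rw [Nat.odd_iff] at hodd heo
      omega
    have hij' : i = j + (e : ZMod p) := by
      have h1 : (e : ZMod p) = ((p - d : ℕ) : ZMod p) := by rw [he]
      have h2 : ((p - d : ℕ) : ZMod p) + (d : ZMod p) = 0 := by
        have : ((p - d : ℕ) : ZMod p) + (d : ZMod p) = ((p - d + d : ℕ) : ZMod p) := by
          push_cast; ring
        rw [this]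
        have : p - d + d = p := by omega
        rw [this, ZMod.natCast_self]
      rw [h1]
      rw [hji]
      linear_combination -h2
    refine key htf hp hinj hind hmin hw j e he3 hep heo hwj ?_
    rw [← hij']; exact hwi
  · have hdp4 : d ≤ p - 4 := by
      rw [Nat.odd_iff] at hodd hdo
      omega
    refine key htf hp hinj hind hmin hw i d hd3 hdp4 hdo hwi ?_
    rw [← hji]; exact hwj
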